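/- Let T be as above (T_{ii} = A_i + K_i, T_{ij} = K_j for i ≠ j, A_i, K_i > 0, A_i ≥ (n-1)K_i) and let D = diag(c_1,…,c_n) with c_i > 0 for all i. Then every eigenvalue of the matrix J = −T·D has strictly negative real part. -/

import Mathlib

theorem stmt_5 (n : ℕ) (hn : 2 ≤ n) (A K : Fin n → ℝ)
    (hA : ∀ i, 0 < A i) (hK : ∀ i, 0 < K i)
    (hAK : ∀ i, ((n : ℝ) - 1) * K i ≤ A i)
    (T : Matrix (Fin n) (Fin n) ℝ)
    (hT : ∀ i j, T i j = if i = j then A i + K i else K j)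
    (c : Fin n → ℝ) (hc : ∀ i, 0 < c i) :
    ∀ (μ : ℂ) (v : Fin n → ℂ), v ≠ 0 →
      (((-(T * Matrix.diagonal c)).map (Complex.ofReal)).mulVec v = μ • v) →
      μ.re < 0 := by
  intro μ v hv hev
  set M : Matrix (Fin n) (Fin n) ℝ := -(T * Matrix.diagonal c) with hM
  have hMe : ∀ i j, M i j = -(T i j * c j) := by
    intro i j; simp [hM, Matrix.mul_diagonal]
  -- the matrix N - μ•1 is singular
  have h0 : ((M.map Complex.ofReal) - μ • 1).mulVec v = 0 := by
    rw [Matrix.sub_mulVec, hev, Matrix.smul_mulVec, Matrix.one_mulVec, sub_self]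
  have hdet : ((M.map Complex.ofReal) - μ • 1).det = 0 :=
    Matrix.exists_mulVec_eq_zero_iff.mp ⟨v, hv, h0⟩
  have hdetT : (Matrix.transpose ((M.map Complex.ofReal) - μ • 1)).det = 0 := by
    rw [Matrix.det_transpose]; exact hdet
  obtain ⟨w, hw, hweq⟩ := Matrix.exists_mulVec_eq_zero_iff.mpr hdetT
  -- eigen equation for the transpose
  have heig : ∀ i, (∑ j, ((M j i : ℝ) : ℂ) * w j) = μ * w i := by
    intro i
    have := congrFun hweq i
    simp only [Matrix.mulVec, dotProduct, Matrix.transpose_apply,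
      Matrix.sub_apply, Matrix.map_apply, Matrix.smul_apply, Matrix.one_apply,
      sub_mul, Finset.sum_sub_distrib, Pi.zero_apply] at this
    have h2 : ∑ j, (μ • if j = i then (1:ℂ) else 0) * w j = μ * w i := by
      rw [Finset.sum_eq_single i]
      · simp
      · intro b _ hb; simp [hb]
      · simp
    rw [sub_eq_zero] at this
    rw [this, h2]
  -- choose index with maximal |w i|
  obtain ⟨i, -, hi⟩ := Finset.exists_max_image Finset.univ
    (fun j => ‖w j‖) ⟨⟨0, by omega⟩, Finset.mem_univ _⟩
  have hwi : w i ≠ 0 := by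
    intro h
    apply hw
    funext j
    have := hi j (Finset.mem_univ j)
    simp [h] at this
    simpa using this
  have hwi' : 0 < ‖w i‖ := norm_pos_iff.mpr hwi
  set d : ℝ := (A i + K i) * c i with hd
  -- split the sum
  have hsplit : (μ + (d : ℂ)) * w i = -∑ j ∈ Finset.univ.erase i, ((K i * c i : ℝ) : ℂ) * w j := by
    have := heig i
    rw [← Finset.add_sum_erase _ _ (Finset.mem_univ i)] at this
    have hMi : M i i = -d := by rw [hMe, hT]; simp [hd]
    have hMj : ∀ j, j ≠ i → M j i = -(K i * c i) := by
      intro j hj; rw [hMe, hT]; simp [hj]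
    rw [hMi] at this
    have hsum : ∑ j ∈ Finset.univ.erase i, ((M j i : ℝ) : ℂ) * w j
        = ∑ j ∈ Finset.univ.erase i, -(((K i * c i : ℝ) : ℂ) * w j) := by
      apply Finset.sum_congr rfl
      intro j hj
      rw [hMj j (Finset.ne_of_mem_erase hj)]
      push_cast
      ring
    rw [hsum, Finset.sum_neg_distrib] at this
    have : μ * w i - (((-d : ℝ)) : ℂ) * w i
        = -∑ j ∈ Finset.univ.erase i, ((K i * c i : ℝ) : ℂ) * w j := by
      rw [← this]; ring
    rw [← this]; push_cast; ring
  -- bound |μ + d|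
  have hbound : ‖μ + (d : ℂ)‖ * ‖w i‖
      ≤ (K i * c i) * (((n : ℝ) - 1) * ‖w i‖) := by
    rw [← norm_mul, hsplit, norm_neg]
    calc ‖∑ j ∈ Finset.univ.erase i, ((K i * c i : ℝ) : ℂ) * w j‖
        ≤ ∑ j ∈ Finset.univ.erase i, ‖((K i * c i : ℝ) : ℂ) * w j‖ :=
          norm_sum_le _ _
      _ ≤ ∑ j ∈ Finset.univ.erase i, (K i * c i) * ‖w i‖ := by
          apply Finset.sum_le_sum
          intro j hj
          rw [norm_mul, Complex.norm_real, Real.norm_eq_abs, abs_of_pos (mul_pos (hK i) (hc i))]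
          exact mul_le_mul_of_nonneg_left (hi j (Finset.mem_univ j)) (mul_pos (hK i) (hc i)).le
      _ = (K i * c i) * (((n : ℝ) - 1) * ‖w i‖) := by
          rw [Finset.sum_const, Finset.card_erase_of_mem (Finset.mem_univ i)]
          simp only [Finset.card_univ, Fintype.card_fin, nsmul_eq_mul]
          rw [Nat.cast_sub (by omega)]
          push_cast
          ring
  have hb2 : ‖μ + (d : ℂ)‖ ≤ ((n : ℝ) - 1) * K i * c i := by
    have := le_of_mul_le_mul_right (by linarith [hbound] : ‖μ + (d : ℂ)‖ * ‖w i‖ ≤ (((n : ℝ) - 1) * K i * c i) * ‖w i‖) hwi'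
    exact this
  have hb3 : ‖μ + (d : ℂ)‖ ≤ A i * c i := by
    apply hb2.trans
    have := hAK i
    nlinarith [hc i]
  have hre : μ.re + d ≤ ‖μ + (d : ℂ)‖ := by
    have h1 : (μ + (d : ℂ)).re = μ.re + d := by simp
    calc μ.re + d = (μ + (d : ℂ)).re := h1.symm
      _ ≤ ‖μ + (d : ℂ)‖ := Complex.re_le_norm _
  have : μ.re ≤ -(K i * c i) := by
    have : μ.re + (A i + K i) * c i ≤ A i * c i := by
      rw [← hd] at *; linarith
    linarith
  nlinarith [hK i, hc i]
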